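/- Let T : ℝⁿ → ℝⁿ and let the power-iteration sequence (uᵏ) satisfy uᵏ⁺¹ = sign(⟨uᵏ, T(uᵏ)⟩) · T(uᵏ)/‖T(uᵏ)‖ with ‖uᵏ‖ = 1, T(uᵏ) ≠ 0 and ⟨uᵏ, T(uᵏ)⟩ ≠ 0 for all k. Suppose the iteration converges exactly at iteration N, i.e., uᵏ⁺¹ = uᵏ for all k ≥ N and uᵏ⁺¹ ≠ uᵏ for all k < N. Then |R(uᵏ)| < ‖T(uᵏ)‖ for all k < N, and |R(uᵏ)| = ‖T(uᴺ)‖ for all k ≥ N, where R(u) = ⟨u, T(u)⟩/‖u‖² is the Rayleigh quotient. -/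
import Mathlib


open scoped RealInnerProductSpace

/-- If the power iteration converges exactly at iteration `N`, then the
Rayleigh quotient `R(u) = ⟪u, T u⟫ / ‖u‖²` satisfies `|R(u^k)| < ‖T (u^k)‖`
strictly before convergence, and `|R(u^k)| = ‖T (u^N)‖` afterwards. -/
theorem rayleigh_quotient_before_and_after_convergence
    (n : ℕ) (T : EuclideanSpace ℝ (Fin n) → EuclideanSpace ℝ (Fin n))
    (u : ℕ → EuclideanSpace ℝ (Fin n))
    (hrec : ∀ k, u (k + 1) =
      Real.sign ⟪u k, T (u k)⟫ • (‖T (u k)‖⁻¹ • T (u k)))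
    (hnorm : ∀ k, ‖u k‖ = 1)
    (hT : ∀ k, T (u k) ≠ 0)
    (hip : ∀ k, ⟪u k, T (u k)⟫ ≠ 0)
    (N : ℕ)
    (hafter : ∀ k, N ≤ k → u (k + 1) = u k)
    (hbefore : ∀ k, k < N → u (k + 1) ≠ u k) :
    (∀ k, k < N → |⟪u k, T (u k)⟫ / ‖u k‖ ^ 2| < ‖T (u k)‖) ∧
      (∀ k, N ≤ k → |⟪u k, T (u k)⟫ / ‖u k‖ ^ 2| = ‖T (u N)‖) := by
  have hsq : ∀ k, ⟪u k, T (u k)⟫ / ‖u k‖ ^ 2 = ⟪u k, T (u k)⟫ := by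
    intro k; rw [hnorm k]; simp
  -- if T (u k) is a nonzero multiple of u k, the iteration is stationary at k
  have hfixed : ∀ k (r : ℝ), r ≠ 0 → T (u k) = r • u k → u (k + 1) = u k := by
    intro k r hr hTr
    have hin : ⟪u k, T (u k)⟫ = r := by
      rw [hTr, real_inner_smul_right, real_inner_self_eq_norm_sq, hnorm k]; ring
    have hnr : ‖T (u k)‖ = |r| := by
      rw [hTr, norm_smul, hnorm k, mul_one, Real.norm_eq_abs]
    rw [hrec k, hin, hnr, hTr, smul_smul, smul_smul]
    have : Real.sign r * (|r|⁻¹ * r) = 1 := by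
      rcases lt_or_gt_of_ne hr with h | h
      · rw [Real.sign_of_neg h, abs_of_neg h]
        field_simp
      · rw [Real.sign_of_pos h, abs_of_pos h]
        field_simp
    rw [mul_assoc, this, one_smul]
  -- u is eventually constant
  have hconst : ∀ k, N ≤ k → u k = u N := by
    intro k hk
    induction k with
    | zero => rw [Nat.le_zero.1 hk]
    | succ m ih =>
      rcases Nat.lt_or_ge N (m + 1) with h | h
      · have hm : N ≤ m := by omega
        rw [hafter m hm, ih hm]
      · have : N = m + 1 := by omega
        rw [this]
  constructor
  · intro k hk
    rw [hsq k]
    rcases lt_or_eq_of_le (abs_real_inner_le_norm (u k) (T (u k))) with h | h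
    · rwa [hnorm k, one_mul] at h
    · exfalso
      apply hbefore k hk
      rw [hnorm k, one_mul] at h
      have hTn : ‖T (u k)‖ ≠ 0 := norm_ne_zero_iff.2 (hT k)
      rcases abs_eq (norm_nonneg (T (u k))) |>.1 h with h1 | h1
      · have heq : ⟪u k, T (u k)⟫ = ‖u k‖ * ‖T (u k)‖ := by
          rw [hnorm k, one_mul]; exact h1
        have h2 := inner_eq_norm_mul_iff_real.1 heq
        rw [hnorm k, one_smul] at h2
        exact hfixed k ‖T (u k)‖ hTn h2.symm
      · have heq : ⟪u k, -T (u k)⟫ = ‖u k‖ * ‖-T (u k)‖ := by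
          rw [hnorm k, one_mul, inner_neg_right, norm_neg]; linarith [h1]
        have h2 := inner_eq_norm_mul_iff_real.1 heq
        rw [hnorm k, one_smul, norm_neg] at h2
        have h3 : T (u k) = (-‖T (u k)‖) • u k := by
          rw [neg_smul, h2, neg_neg]
        exact hfixed k (-‖T (u k)‖) (neg_ne_zero.2 hTn) h3
  · intro k hk
    rw [hsq k, hconst k hk]
    have hfix := hafter N le_rfl
    rw [hrec N] at hfix
    have h1 : ⟪u N, u N⟫ = (1 : ℝ) := by
      rw [real_inner_self_eq_norm_sq, hnorm N]; norm_num
    have h2 : ⟪u N, Real.sign ⟪u N, T (u N)⟫ • (‖T (u N)‖⁻¹ • T (u N))⟫ = (1:ℝ) := by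
      rw [hfix, h1]
    rw [real_inner_smul_right, real_inner_smul_right] at h2
    have hs : Real.sign ⟪u N, T (u N)⟫ * ⟪u N, T (u N)⟫ = |⟪u N, T (u N)⟫| := by
      rcases lt_or_gt_of_ne (hip N) with h | h
      · rw [Real.sign_of_neg h, abs_of_neg h]; ring
      · rw [Real.sign_of_pos h, abs_of_pos h]; ring
    have h3 : ‖T (u N)‖⁻¹ * |⟪u N, T (u N)⟫| = 1 := by
      rw [← hs, ← h2]; ring
    have hTn : ‖T (u N)‖ ≠ 0 := norm_ne_zero_iff.2 (hT N)
    rw [inv_mul_eq_one₀ hTn] at h3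
    exact h3.symm
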